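/- A norm ‖·‖ on M_n(ℂ) is an M-norm if and only if its dual norm ‖·‖_* is an L-norm. -/

import Mathlib

open Matrix BigOperators ComplexOrder

/-- Square complex matrices. -/
abbrev Mat (n : ℕ) := Matrix (Fin n) (Fin n) ℂ

/-- `N` is a norm on `Mat n`. -/
def IsMatrixNorm {n : ℕ} (N : Mat n → ℝ) : Prop :=
  (∀ A, N A = 0 ↔ A = 0) ∧
  (∀ (c : ℂ) (A : Mat n), N (c • A) = ‖c‖ * N A) ∧
  (∀ A B : Mat n, N (A + B) ≤ N A + N B)

/-- A set of matrices is C*-convex. -/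
def CStarConvex {n : ℕ} (K : Set (Mat n)) : Prop :=
  ∀ (k : ℕ) (C A : Fin k → Mat n), (∀ i, A i ∈ K) →
    (∑ i, (C i)ᴴ * C i = 1) → (∑ i, (C i)ᴴ * A i * C i) ∈ K

/-- `N` is an M-norm. -/
def IsMNorm {n : ℕ} (N : Mat n → ℝ) : Prop :=
  ∀ (k : ℕ) (C X : Fin k → Mat n), (∑ i, (C i)ᴴ * C i = 1) →
    N (∑ i, (C i)ᴴ * X i * C i) ≤ ⨆ i, N (X i)

/-- `N` is an L-norm. -/
def IsLNorm {n : ℕ} (N : Mat n → ℝ) : Prop :=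
  ∀ (k : ℕ) (C : Fin k → Mat n) (X : Mat n), (∑ i, (C i)ᴴ * C i = 1) →
    ∑ i, N (C i * X * (C i)ᴴ) ≤ N X

/-- The dual norm with respect to the pairing `⟨Y|X⟩ = Tr(Yᴴ X)`. -/
noncomputable def dualNorm {n : ℕ} (N : Mat n → ℝ) (Y : Mat n) : ℝ :=
  sSup {r | ∃ X : Mat n, N X ≤ 1 ∧ r = ‖(Yᴴ * X).trace‖}

/-- The operator (spectral) norm of a matrix. -/
noncomputable def opNorm {n : ℕ} (A : Mat n) : ℝ :=
  ‖Matrix.toEuclideanCLM (𝕜 := ℂ) (n := Fin n) A‖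

/-- The trace norm `‖A‖₁ = Tr((AᴴA)^{1/2})`. -/
noncomputable def traceNorm {n : ℕ} (A : Mat n) : ℝ :=
  ((Matrix.posSemidef_conjTranspose_mul_self A).1.eigenvectorUnitary.1 *
    diagonal ((fun r : ℝ => (r : ℂ)) ∘ Real.sqrt ∘ (Matrix.posSemidef_conjTranspose_mul_self A).1.eigenvalues) *
    (star (Matrix.posSemidef_conjTranspose_mul_self A).1.eigenvectorUnitary : Mat n)).trace.re

/-- The numerical radius. -/
noncomputable def numRadius {n : ℕ} (A : Mat n) : ℝ :=
  sSup {r | ∃ x : EuclideanSpace ℂ (Fin n), ‖x‖ = 1 ∧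
    r = ‖inner ℂ x (Matrix.toEuclideanCLM (𝕜 := ℂ) (n := Fin n) A x)‖}

/-- Type synonym for `Mat n` carrying no global instances. -/
def MatB (n : ℕ) : Type := Mat n

/-- The identity map into the synonym. -/
def MatB.mk {n : ℕ} (X : Mat n) : MatB n := X

/-- The identity map out of the synonym. -/
def MatB.un {n : ℕ} (X : MatB n) : Mat n := X

variable {n : ℕ} {N : Mat n → ℝ}

lemma MN.neg (hN : IsMatrixNorm N) (A : Mat n) : N (-A) = N A := by
  have := hN.2.1 (-1) A
  simpa using this

lemma MN.nonneg (hN : IsMatrixNorm N) (A : Mat n) : 0 ≤ N A := by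
  have h0 : N 0 = 0 := (hN.1 0).2 rfl
  have := hN.2.2 A (-A)
  rw [add_neg_cancel, h0, MN.neg hN] at this
  linarith

noncomputable def MN.core (hN : IsMatrixNorm N) : NormedAddCommGroup (MatB n) :=
  letI : AddCommGroup (MatB n) := inferInstanceAs (AddCommGroup (Mat n))
  AddGroupNorm.toNormedAddCommGroup
    { toFun := fun X => N X
      map_zero' := (hN.1 0).2 rfl
      add_le' := hN.2.2
      neg' := MN.neg hN
      eq_zero_of_map_eq_zero' := fun A h => (hN.1 A).1 h }

noncomputable def MN.nspace (hN : IsMatrixNorm N) :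
    @NormedSpace ℂ (MatB n) _ (MN.core hN).toSeminormedAddCommGroup :=
  letI := MN.core hN
  @NormedSpace.mk ℂ (MatB n) _ _ (inferInstanceAs (Module ℂ (Mat n)))
    (fun c X => le_of_eq (hN.2.1 c X))

lemma MN.bddAbove (hN : IsMatrixNorm N) (Y : Mat n) :
    BddAbove {r | ∃ X : Mat n, N X ≤ 1 ∧ r = ‖(Yᴴ * X).trace‖} := by
  letI := MN.core hN
  letI := MN.nspace hN
  letI : FiniteDimensional ℂ (MatB n) := inferInstanceAs (FiniteDimensional ℂ (Mat n))
  let f : MatB n →ₗ[ℂ] ℂ :=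
    { toFun := fun X => (Yᴴ * MatB.un X).trace
      map_add' := by
        intro a b
        show (Yᴴ * (MatB.un a + MatB.un b)).trace
            = (Yᴴ * MatB.un a).trace + (Yᴴ * MatB.un b).trace
        rw [Matrix.mul_add, Matrix.trace_add]
      map_smul' := by
        intro c a
        show (Yᴴ * (c • MatB.un a)).trace = c * (Yᴴ * MatB.un a).trace
        rw [Matrix.mul_smul, Matrix.trace_smul, smul_eq_mul] }
  let g := LinearMap.toContinuousLinearMap f
  refine ⟨‖g‖, ?_⟩
  rintro r ⟨X, hX, rfl⟩
  have h1 : ‖(Yᴴ * X).trace‖ = ‖g (MatB.mk X)‖ := rfl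
  have h2 : ‖(MatB.mk X)‖ = N X := rfl
  rw [h1]
  calc ‖g (MatB.mk X)‖ ≤ ‖g‖ * ‖(MatB.mk X)‖ := g.le_opNorm _
    _ ≤ ‖g‖ * 1 := by rw [h2]; exact mul_le_mul_of_nonneg_left hX (norm_nonneg g)
    _ = ‖g‖ := mul_one _

lemma MN.le_dual (hN : IsMatrixNorm N) {Y X : Mat n} (hX : N X ≤ 1) :
    ‖(Yᴴ * X).trace‖ ≤ dualNorm N Y :=
  le_csSup (MN.bddAbove hN Y) ⟨X, hX, rfl⟩

lemma MN.dual_nonneg (hN : IsMatrixNorm N) (Y : Mat n) : 0 ≤ dualNorm N Y := by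
  have h := MN.le_dual hN (Y := Y) (X := 0) (le_of_eq_of_le ((hN.1 0).2 rfl) zero_le_one)
  exact le_trans (norm_nonneg _) h

lemma MN.pairing_le (hN : IsMatrixNorm N) (Y X : Mat n) :
    ‖(Yᴴ * X).trace‖ ≤ dualNorm N Y * N X := by
  rcases eq_or_lt_of_le (MN.nonneg hN X) with h0 | hpos
  · have hX0 : X = 0 := (hN.1 X).1 h0.symm
    rw [hX0, Matrix.mul_zero, Matrix.trace_zero, norm_zero]
    have := MN.dual_nonneg hN Y
    have := MN.nonneg hN (0 : Mat n)
    positivity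
  · have hX1 : N (((N X : ℂ))⁻¹ • X) ≤ 1 := by
      rw [hN.2.1]
      rw [norm_inv]
      rw [Complex.norm_real, Real.norm_eq_abs, abs_of_pos hpos]
      rw [inv_mul_cancel₀ (ne_of_gt hpos)]
    have h := MN.le_dual hN (Y := Y) hX1
    rw [Matrix.mul_smul, Matrix.trace_smul, smul_eq_mul, norm_mul, norm_inv,
      Complex.norm_real, Real.norm_eq_abs, abs_of_pos hpos] at h
    rw [inv_mul_le_iff₀ hpos] at h
    linarith [h]

lemma MN.exists_dual_attain (hN : IsMatrixNorm N) (Z : Mat n) :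
    ∃ Y : Mat n, dualNorm N Y ≤ 1 ∧ ‖(Yᴴ * Z).trace‖ = N Z := by
  rcases eq_or_ne Z 0 with rfl | hZ
  · refine ⟨0, ?_, by simp [(hN.1 0).2 rfl]⟩
    have : {r | ∃ X : Mat n, N X ≤ 1 ∧ r = ‖((0 : Mat n)ᴴ * X).trace‖} = {0} := by
      ext r
      constructor
      · rintro ⟨X, -, rfl⟩; simp
      · rintro rfl; exact ⟨0, by rw [(hN.1 0).2 rfl]; norm_num, by simp⟩
    rw [dualNorm, this, csSup_singleton]
    norm_num
  · letI := MN.core hN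
    letI := MN.nspace hN
    letI : FiniteDimensional ℂ (MatB n) := inferInstanceAs (FiniteDimensional ℂ (Mat n))
    have hZ' : MatB.mk Z ≠ 0 := fun h => hZ h
    obtain ⟨g, hg1, hgZ⟩ := exists_dual_vector ℂ (MatB.mk Z) (norm_ne_zero_iff.mpr hZ')
    let mkL : Mat n →ₗ[ℂ] MatB n :=
      { toFun := MatB.mk
        map_add' := fun _ _ => rfl
        map_smul' := fun _ _ => rfl }
    let h : Mat n →ₗ[ℂ] ℂ := g.toLinearMap.comp mkL
    set Y : Mat n := Matrix.of
      (fun j i => starRingEnd ℂ (h (Matrix.single j i 1))) with hY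
    have key : ∀ X : Mat n, (Yᴴ * X).trace = h X := by
      intro X
      have tr : (Yᴴ * X).trace = ∑ i, ∑ j, h (Matrix.single j i 1) * X j i := by
        simp [Matrix.trace, Matrix.mul_apply, Matrix.conjTranspose_apply, Matrix.diag, hY]
      rw [tr, Finset.sum_comm]
      conv_rhs => rw [Matrix.matrix_eq_sum_single X]
      rw [map_sum]
      refine Finset.sum_congr rfl fun j _ => ?_
      rw [map_sum]
      refine Finset.sum_congr rfl fun i _ => ?_
      have : Matrix.single j i (X j i) = X j i • Matrix.single j i 1 := by
        rw [Matrix.smul_single, smul_eq_mul, mul_one]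
      rw [this, _root_.map_smul, smul_eq_mul, mul_comm]
    have habs : ∀ X : Mat n, ‖(Yᴴ * X).trace‖ = ‖g (MatB.mk X)‖ := by
      intro X
      rw [key X]
      rfl
    refine ⟨Y, ?_, ?_⟩
    · apply Real.sSup_le
      · rintro r ⟨X, hX, rfl⟩
        rw [habs X]
        calc ‖g (MatB.mk X)‖ ≤ ‖g‖ * ‖MatB.mk X‖ := g.le_opNorm _
          _ = N X := by rw [hg1, one_mul]; rfl
          _ ≤ 1 := hX
      · norm_num
    · rw [habs Z, hgZ]
      have : ‖MatB.mk Z‖ = N Z := rfl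
      rw [this]
      simp [Complex.norm_real, abs_of_nonneg (MN.nonneg hN Z)]

noncomputable def lam (t : ℂ) : ℂ :=
  if t = 0 then 1 else (starRingEnd ℂ) t / (‖t‖ : ℂ)

lemma lam_abs (t : ℂ) : ‖lam t‖ = 1 := by
  unfold lam
  split_ifs with h
  · simp
  · rw [norm_div, Complex.norm_conj, Complex.norm_real, Real.norm_eq_abs,
      abs_of_pos (norm_pos_iff.mpr h), div_self (norm_ne_zero_iff.mpr h)]

lemma lam_mul (t : ℂ) : lam t * t = (‖t‖ : ℂ) := by
  unfold lam
  split_ifs with h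
  · simp [h]
  · rw [div_mul_eq_mul_div, mul_comm, Complex.mul_conj]
    rw [Complex.normSq_eq_norm_sq]
    have h2 : (‖t‖ : ℂ) ≠ 0 := by
      simpa using h
    push_cast
    field_simp

theorem isMNorm_iff_dual_isLNorm' {n : ℕ} (N : Mat n → ℝ)
    (hN : IsMatrixNorm N) :
    (∀ (k : ℕ) (C X : Fin k → Mat n), (∑ i, (C i)ᴴ * C i = 1) →
      N (∑ i, (C i)ᴴ * X i * C i) ≤ ⨆ i, N (X i)) ↔
    (∀ (k : ℕ) (C : Fin k → Mat n) (X : Mat n), (∑ i, (C i)ᴴ * C i = 1) →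
      ∑ i, dualNorm N (C i * X * (C i)ᴴ) ≤ dualNorm N X) := by
  constructor
  · intro hM k C X hC
    rcases Nat.eq_zero_or_pos k with rfl | hk
    · simpa using MN.dual_nonneg hN X
    haveI : Nonempty (Fin k) := ⟨⟨0, hk⟩⟩
    refine le_of_forall_pos_le_add ?_
    intro ε hε
    have hek : 0 < ε / k := by positivity
    -- choose near-optimal test matrices
    have hch : ∀ i : Fin k, ∃ Zi : Mat n, N Zi ≤ 1 ∧
        dualNorm N (C i * X * (C i)ᴴ) - ε / k <
          ‖((C i * X * (C i)ᴴ)ᴴ * Zi).trace‖ := by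
      intro i
      have hne : {r | ∃ W : Mat n, N W ≤ 1 ∧
          r = ‖((C i * X * (C i)ᴴ)ᴴ * W).trace‖}.Nonempty :=
        ⟨_, 0, le_of_eq_of_le ((hN.1 0).2 rfl) zero_le_one, rfl⟩
      have hlt : dualNorm N (C i * X * (C i)ᴴ) - ε / k < dualNorm N (C i * X * (C i)ᴴ) :=
        sub_lt_self _ hek
      obtain ⟨r, ⟨Zi, hZi, rfl⟩, hr⟩ := exists_lt_of_lt_csSup hne hlt
      exact ⟨Zi, hZi, hr⟩
    choose Z hZ1 hZ2 using hch
    set t : Fin k → ℂ := fun i => ((C i * X * (C i)ᴴ)ᴴ * Z i).trace with ht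
    set W : Mat n := ∑ i, (C i)ᴴ * (lam (t i) • Z i) * C i with hW
    have hNW : N W ≤ 1 := by
      refine le_trans (hM k C (fun i => lam (t i) • Z i) hC) ?_
      refine ciSup_le fun i => ?_
      rw [hN.2.1, lam_abs, one_mul]
      exact hZ1 i
    have htr : (Xᴴ * W).trace = ((∑ i, ‖t i‖ : ℝ) : ℂ) := by
      rw [hW, Matrix.mul_sum, Matrix.trace_sum]
      push_cast
      refine Finset.sum_congr rfl fun i _ => ?_
      have h1 : (C i)ᴴ * (lam (t i) • Z i) * C i = lam (t i) • ((C i)ᴴ * Z i * C i) := by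
        rw [Matrix.mul_smul, Matrix.smul_mul]
      rw [h1, Matrix.mul_smul, Matrix.trace_smul, smul_eq_mul]
      have h2 : (Xᴴ * ((C i)ᴴ * Z i * C i)).trace = t i := by
        rw [ht]
        simp only [Matrix.conjTranspose_mul, Matrix.conjTranspose_conjTranspose]
        rw [← Matrix.mul_assoc, ← Matrix.mul_assoc, Matrix.trace_mul_comm]
        simp only [Matrix.mul_assoc]
      rw [h2, lam_mul]
    have hub : ‖(Xᴴ * W).trace‖ ≤ dualNorm N X := MN.le_dual hN hNW
    rw [htr] at hub
    rw [Complex.norm_real, Real.norm_eq_abs, abs_of_nonneg (Finset.sum_nonneg fun i _ => norm_nonneg _)]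
      at hub
    have hsum : ∑ i, dualNorm N (C i * X * (C i)ᴴ) ≤ (∑ i, ‖t i‖) + ε := by
      have : ∑ i, dualNorm N (C i * X * (C i)ᴴ) ≤ ∑ i, (‖t i‖ + ε / k) := by
        refine Finset.sum_le_sum fun i _ => ?_
        have h' : ‖t i‖ = ‖((C i * X * (C i)ᴴ)ᴴ * Z i).trace‖ := rfl
        have := hZ2 i
        rw [← h'] at this
        linarith
      rw [Finset.sum_add_distrib, Finset.sum_const, Finset.card_univ, Fintype.card_fin,
        nsmul_eq_mul] at this
      have hk' : (k : ℝ) * (ε / k) = ε := by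
        field_simp
      linarith
    linarith
  · intro hL k C X hC
    rcases Nat.eq_zero_or_pos k with rfl | hk
    · rw [Finset.univ_eq_empty, Finset.sum_empty, (hN.1 0).2 rfl, Real.iSup_of_isEmpty]
    haveI : Nonempty (Fin k) := ⟨⟨0, hk⟩⟩
    obtain ⟨Y, hY1, hYZ⟩ := MN.exists_dual_attain hN (∑ i, (C i)ᴴ * X i * C i)
    rw [← hYZ]
    have hbdd : BddAbove (Set.range fun i => N (X i)) :=
      Set.Finite.bddAbove (Set.finite_range _)
    have hsup0 : 0 ≤ ⨆ i, N (X i) :=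
      le_trans (MN.nonneg hN (X ⟨0, hk⟩)) (le_ciSup hbdd ⟨0, hk⟩)
    calc ‖(Yᴴ * ∑ i, (C i)ᴴ * X i * C i).trace‖
        = ‖∑ i, (((C i * Y * (C i)ᴴ)ᴴ) * X i).trace‖ := by
          rw [Matrix.mul_sum, Matrix.trace_sum]
          congr 1
          refine Finset.sum_congr rfl fun i _ => ?_
          simp only [Matrix.conjTranspose_mul, Matrix.conjTranspose_conjTranspose]
          rw [← Matrix.mul_assoc, ← Matrix.mul_assoc, Matrix.trace_mul_comm]
          simp only [Matrix.mul_assoc]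
      _ ≤ ∑ i, ‖(((C i * Y * (C i)ᴴ)ᴴ) * X i).trace‖ := by
          exact norm_sum_le _ _
      _ ≤ ∑ i, dualNorm N (C i * Y * (C i)ᴴ) * N (X i) :=
          Finset.sum_le_sum fun i _ => MN.pairing_le hN _ _
      _ ≤ ∑ i, dualNorm N (C i * Y * (C i)ᴴ) * (⨆ j, N (X j)) := by
          refine Finset.sum_le_sum fun i _ => ?_
          refine mul_le_mul_of_nonneg_left ?_ (MN.dual_nonneg hN _)
          exact le_ciSup hbdd i
      _ = (∑ i, dualNorm N (C i * Y * (C i)ᴴ)) * (⨆ j, N (X j)) := by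
          rw [Finset.sum_mul]
      _ ≤ dualNorm N Y * (⨆ j, N (X j)) :=
          mul_le_mul_of_nonneg_right (hL k C Y hC) hsup0
      _ ≤ 1 * (⨆ j, N (X j)) := mul_le_mul_of_nonneg_right hY1 hsup0
      _ = ⨆ j, N (X j) := one_mul _

theorem isMNorm_iff_dual_isLNorm {n : ℕ} (N : Mat n → ℝ)
    (hN : IsMatrixNorm N) :
    IsMNorm N ↔ IsLNorm (dualNorm N) := isMNorm_iff_dual_isLNorm' N hN
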